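/- arXiv:2203.03036 — 3 statements merged into one kernel-verified Lean document; each statement's English description precedes it below -/
import Mathlib

section
/- Let G be a finite group, π an irreducible unitary representation of G of dimension d, and 1 ≤ i ≤ d fixed. Then the family {√(d/|G|)·π_{j,i} : j = 1,…,d} is an orthonormal basis of the subspace E_{π,i} of L²(G); in particular E_{π,i} has dimension d. -/
open scoped BigOperators

noncomputable section

/-- A unitary representation of a group `G` of dimension `d`: a group homomorphism from `G`
into the group of `d × d` complex unitary matrices. -/
abbrev URep (G : Type*) [Group G] (d : ℕ) : Type _ :=
  G →* Matrix.unitaryGroup (Fin d) ℂ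

/-- A unitary representation is irreducible if its dimension is positive and the only
subspaces `W ⊆ ℂ^d` with `π(g)W ⊆ W` for all `g` are `{0}` and `ℂ^d`. -/
def URepIrreducible {G : Type*} [Group G] {d : ℕ} (π : URep G d) : Prop :=
  0 < d ∧ ∀ W : Submodule ℂ (Fin d → ℂ),
    (∀ g : G, ∀ ξ ∈ W, ((π g : Matrix (Fin d) (Fin d) ℂ)).mulVec ξ ∈ W) → W = ⊥ ∨ W = ⊤

/-- The coefficient function `π_{j,i}(g) = (π(g))_{i,j}`. -/
def coeff {G : Type*} [Group G] {d : ℕ} (π : URep G d) (j i : Fin d) : G → ℂ :=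
  fun g => (π g : Matrix (Fin d) (Fin d) ℂ) i j

/-- The subspace `E_{π,i} = span{π_{j,i} : 1 ≤ j ≤ d}` of `L²(G)`. -/
def Esp {G : Type*} [Group G] {d : ℕ} (π : URep G d) (i : Fin d) : Submodule ℂ (G → ℂ) :=
  Submodule.span ℂ (Set.range fun j : Fin d => coeff π j i)

/-- Unitary equivalence of two unitary representations: the dimensions agree and there is a
unitary matrix `U` with `U⁻¹ π(g) U = σ(g)` for all `g`. -/
def UEquiv {G : Type*} [Group G] {d d' : ℕ} (π : URep G d) (σ : URep G d') : Prop :=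
  ∃ h : d = d', ∃ U : Matrix (Fin d') (Fin d') ℂ, U ∈ Matrix.unitaryGroup (Fin d') ℂ ∧
    ∀ g : G, U⁻¹ * (Matrix.reindex (finCongr h) (finCongr h)
        ((π g : Matrix (Fin d) (Fin d) ℂ))) * U = (σ g : Matrix (Fin d') (Fin d') ℂ)

/-- `π(S) = ∑_{a ∈ S} π(a)`. -/
def repSum {G : Type*} [Group G] {d : ℕ} (π : URep G d) (S : Finset G) :
    Matrix (Fin d) (Fin d) ℂ :=
  ∑ a ∈ S, (π a : Matrix (Fin d) (Fin d) ℂ)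

/-- `X` is a `λ`-eigenvector (possibly zero) of `M`: `M X = λ X`. -/
def IsEigvec {d : ℕ} (M : Matrix (Fin d) (Fin d) ℂ) (lam : ℝ) (X : Fin d → ℂ) : Prop :=
  M.mulVec X = (lam : ℂ) • X

/-- `λ` is an eigenvalue of `M`. -/
def IsEigval {d : ℕ} (M : Matrix (Fin d) (Fin d) ℂ) (lam : ℝ) : Prop :=
  ∃ X : Fin d → ℂ, X ≠ 0 ∧ IsEigvec M lam X

/-- The `λ`-eigenspace `E_λ(M)` as a submodule of `ℂ^d`. -/
def eigSp {d : ℕ} (M : Matrix (Fin d) (Fin d) ℂ) (lam : ℝ) : Submodule ℂ (Fin d → ℂ) :=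
  LinearMap.ker (M.mulVecLin - (lam : ℂ) • LinearMap.id)

/-- The inner product `⟨u, v⟩ = ∑ u(x) conj(v(x))`, linear in the first variable
(the convention of the paper). -/
def dotC {X : Type*} [Fintype X] (u v : X → ℂ) : ℂ :=
  ∑ x, u x * (starRingEnd ℂ) (v x)

/-- The squared norm `‖u‖² = ∑ |u(x)|²`. -/
def norm2 {X : Type*} [Fintype X] (u : X → ℂ) : ℝ :=
  ∑ x, Complex.normSq (u x)

/-- The map `Θ_{π,i} : X ↦ ∑_k X_k π_{k,i}`. -/
def Theta {G : Type*} [Group G] {d : ℕ} (π : URep G d) (i : Fin d)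
    (X : Fin d → ℂ) : G → ℂ :=
  fun g => ∑ k, X k * coeff π k i g

/-- The map `Θ_{π,i}` as a linear map. -/
def ThetaL {G : Type*} [Group G] {d : ℕ} (π : URep G d) (i : Fin d) :
    (Fin d → ℂ) →ₗ[ℂ] (G → ℂ) where
  toFun X := fun g => ∑ k, X k * coeff π k i g
  map_add' X Y := by
    funext g
    simp [add_mul, Finset.sum_add_distrib]
  map_smul' c X := by
    funext g
    simp [Finset.mul_sum, mul_assoc]

/-- The space `Z_{π,i,λ} = {∑_k X_k π_{k,i} : X ∈ E_λ(π(S))}`. -/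
def Zset {G : Type*} [Group G] {d : ℕ} (π : URep G d) (i : Fin d) (lam : ℝ) (S : Finset G) :
    Set (G → ℂ) :=
  {f | ∃ X : Fin d → ℂ, IsEigvec (repSum π S) lam X ∧ f = Theta π i X}

/-- The normalized map `Θ̃_{π,i} = √(d/n!) Θ_{π,i}` for the symmetric group `𝕊_n`. -/
def ThetaT (n : ℕ) {d : ℕ} (π : URep (Equiv.Perm (Fin n)) d) (i : Fin d)
    (X : Fin d → ℂ) : Equiv.Perm (Fin n) → ℂ :=
  fun g => (Real.sqrt (d / n.factorial) : ℂ) * Theta π i X g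

/-- `ψ` is a frame for `W` with lower bound `A` and upper bound `B`:
`A‖v‖² ≤ ∑_t |⟨v, ψ_t⟩|² ≤ B‖v‖²` for all `v ∈ W`. -/
def IsFrameOn {X ι : Type*} [Fintype X] [Fintype ι] (ψ : ι → (X → ℂ)) (W : Set (X → ℂ))
    (A B : ℝ) : Prop :=
  0 < A ∧ A ≤ B ∧ (∀ t, ψ t ∈ W) ∧
    ∀ v ∈ W, A * norm2 v ≤ ∑ t, Complex.normSq (dotC v (ψ t)) ∧
      ∑ t, Complex.normSq (dotC v (ψ t)) ≤ B * norm2 v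

/-- `ψ` is a frame for `W` (for some frame bounds `0 < A ≤ B`). -/
def IsFrameIn {X ι : Type*} [Fintype X] [Fintype ι] (ψ : ι → (X → ℂ)) (W : Set (X → ℂ)) :
    Prop :=
  ∃ A B : ℝ, IsFrameOn ψ W A B


-- auxiliary lemmas
lemma star_mul_self_pi {G : Type*} [Group G] {d : ℕ} (π : URep G d) (g : G) :
    star ((π g : Matrix (Fin d) (Fin d) ℂ)) * (π g : Matrix (Fin d) (Fin d) ℂ) = 1 :=
  Unitary.star_mul_self_of_mem (π g).prop

lemma schur_scalar {G : Type*} [Group G] {d : ℕ} (π : URep G d) (hπ : URepIrreducible π)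
    (M : Matrix (Fin d) (Fin d) ℂ)
    (hM : ∀ g : G, (π g : Matrix (Fin d) (Fin d) ℂ) * M = M * (π g : Matrix (Fin d) (Fin d) ℂ)) :
    ∃ c : ℂ, M = c • (1 : Matrix (Fin d) (Fin d) ℂ) := by
  obtain ⟨hd, hirr⟩ := hπ
  haveI : NeZero d := ⟨hd.ne'⟩
  obtain ⟨c, hc⟩ := Module.End.exists_eigenvalue (Matrix.mulVecLin M)
  obtain ⟨v, hv⟩ := hc.exists_hasEigenvector
  set W := Module.End.eigenspace (Matrix.mulVecLin M) c with hW
  have hinv : ∀ g : G, ∀ ξ ∈ W, ((π g : Matrix (Fin d) (Fin d) ℂ)).mulVec ξ ∈ W := by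
    intro g ξ hξ
    rw [hW, Module.End.mem_eigenspace_iff] at hξ ⊢
    rw [Matrix.mulVecLin_apply] at hξ ⊢
    rw [Matrix.mulVec_mulVec, ← hM, ← Matrix.mulVec_mulVec, hξ, Matrix.mulVec_smul]
  have hWeq : W = ⊤ := by
    rcases hirr W hinv with h | h
    · have hv1 : v ∈ W := hv.1
      rw [h] at hv1
      exact absurd hv1 (by simpa using hv.2)
    · exact h
  refine ⟨c, ?_⟩
  ext a b
  have hx : Pi.single b 1 ∈ W := hWeq ▸ Submodule.mem_top
  rw [hW, Module.End.mem_eigenspace_iff, Matrix.mulVecLin_apply] at hx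
  have := congrFun hx a
  simpa [Matrix.mulVec_single, Matrix.one_apply, Pi.single_apply, eq_comm] using this

lemma triple_entry {d : ℕ} (A B : Matrix (Fin d) (Fin d) ℂ) (j k a e : Fin d) :
    (A * (Matrix.single j k 1 : Matrix (Fin d) (Fin d) ℂ) * B) a e = A a j * B k e := by
  simp [Matrix.mul_apply, Matrix.single, ite_and, Finset.sum_ite_eq, Finset.mul_sum,
    mul_ite, ite_mul]

lemma schur_orthogonality {G : Type*} [Group G] [Fintype G] {d : ℕ} (π : URep G d)
    (hπ : URepIrreducible π) (i j k : Fin d) :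
    ∑ g : G, (π g : Matrix (Fin d) (Fin d) ℂ) i j *
        (starRingEnd ℂ) ((π g : Matrix (Fin d) (Fin d) ℂ) i k) =
      ((Fintype.card G : ℂ) / (d : ℂ)) * (if j = k then 1 else 0) := by
  classical
  set F : G → Matrix (Fin d) (Fin d) ℂ :=
    fun g => (π g : Matrix (Fin d) (Fin d) ℂ) * Matrix.single j k 1 *
      star ((π g : Matrix (Fin d) (Fin d) ℂ)) with hF
  set M : Matrix (Fin d) (Fin d) ℂ := ∑ g : G, F g with hMdef
  have hstep : ∀ h g : G, (π h : Matrix (Fin d) (Fin d) ℂ) * F g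
      = F (h * g) * (π h : Matrix (Fin d) (Fin d) ℂ) := by
    intro h g
    have hmul : (π (h * g) : Matrix (Fin d) (Fin d) ℂ)
        = (π h : Matrix (Fin d) (Fin d) ℂ) * (π g : Matrix (Fin d) (Fin d) ℂ) := by
      rw [map_mul]; rfl
    have h1 : star ((π h : Matrix (Fin d) (Fin d) ℂ)) * (π h : Matrix (Fin d) (Fin d) ℂ) = 1 :=
      star_mul_self_pi π h
    simp only [hF, hmul, star_mul, mul_assoc]
    rw [h1, mul_one]
  have hcomm : ∀ h : G, (π h : Matrix (Fin d) (Fin d) ℂ) * M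
      = M * (π h : Matrix (Fin d) (Fin d) ℂ) := by
    intro h
    rw [hMdef, Finset.mul_sum, Finset.sum_mul]
    calc ∑ g : G, (π h : Matrix (Fin d) (Fin d) ℂ) * F g
        = ∑ g : G, F (h * g) * (π h : Matrix (Fin d) (Fin d) ℂ) :=
          Finset.sum_congr rfl fun g _ => hstep h g
      _ = ∑ g : G, F g * (π h : Matrix (Fin d) (Fin d) ℂ) :=
          Equiv.sum_comp (Equiv.mulLeft h) (fun g => F g * (π h : Matrix (Fin d) (Fin d) ℂ))
  obtain ⟨c, hc⟩ := schur_scalar π hπ M hcomm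
  have htr : M.trace = (Fintype.card G : ℂ) * (if j = k then 1 else 0) := by
    rw [hMdef, Matrix.trace_sum]
    have hFtr : ∀ g : G, (F g).trace = (if j = k then 1 else 0 : ℂ) := by
      intro g
      rw [hF]
      simp only []
      rw [Matrix.trace_mul_cycle, star_mul_self_pi π g, one_mul]
      by_cases hjk : j = k
      · subst hjk; simp [Matrix.trace_single_eq_same]
      · simp [Matrix.trace_single_eq_of_ne _ _ _ hjk, hjk]
    simp [hFtr]
  have hcval : c * d = (Fintype.card G : ℂ) * (if j = k then 1 else 0) := by
    rw [← htr, hc]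
    simp [Matrix.trace_smul, Matrix.trace_one, mul_comm]
  have hentry : M i i = c := by
    rw [hc]; simp [Matrix.one_apply]
  have hMii : M i i = ∑ g : G, (π g : Matrix (Fin d) (Fin d) ℂ) i j *
      (starRingEnd ℂ) ((π g : Matrix (Fin d) (Fin d) ℂ) i k) := by
    rw [hMdef]
    rw [Matrix.sum_apply]
    refine Finset.sum_congr rfl fun g _ => ?_
    rw [hF]
    simp only []
    rw [triple_entry]
    rw [Matrix.star_apply]
    rfl
  have hd0 : (d : ℂ) ≠ 0 := Nat.cast_ne_zero.mpr hπ.1.ne'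
  rw [← hMii, hentry]
  field_simp at hcval ⊢
  linear_combination hcval

lemma dotC_coeff {G : Type*} [Group G] [Fintype G] {d : ℕ} (π : URep G d)
    (hπ : URepIrreducible π) (i j k : Fin d) :
    dotC (coeff π j i) (coeff π k i)
      = ((Fintype.card G : ℂ) / (d : ℂ)) * (if j = k then 1 else 0) := by
  simpa [dotC, coeff] using schur_orthogonality π hπ i j k

/-- For an irreducible unitary representation `π` of a finite group `G` of
dimension `d` and fixed `i`, the family `{√(d/|G|) π_{j,i} : j = 1,…,d}` is an orthonormal
basis of `E_{π,i}`; in particular `E_{π,i}` has dimension `d`. -/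
theorem stmt2 {G : Type*} [Group G] [Fintype G] {d : ℕ}
    (π : URep G d) (hπ : URepIrreducible π) (i : Fin d) :
    (∀ j k : Fin d,
        dotC (((Real.sqrt (d / Fintype.card G) : ℝ) : ℂ) • coeff π j i)
          (((Real.sqrt (d / Fintype.card G) : ℝ) : ℂ) • coeff π k i) =
          if j = k then 1 else 0) ∧
    Submodule.span ℂ
        (Set.range fun j : Fin d =>
          ((Real.sqrt (d / Fintype.card G) : ℝ) : ℂ) • coeff π j i) = Esp π i ∧
    Module.finrank ℂ (Esp π i) = d := by
  classical
  have hd : 0 < d := hπ.1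
  have hd0 : (d : ℂ) ≠ 0 := Nat.cast_ne_zero.mpr hd.ne'
  have hG0 : (Fintype.card G : ℂ) ≠ 0 := Nat.cast_ne_zero.mpr Fintype.card_ne_zero
  have hGpos : (0:ℝ) < Fintype.card G := by exact_mod_cast Fintype.card_pos
  have hdpos : (0:ℝ) < d := by exact_mod_cast hd
  set s : ℝ := Real.sqrt ((d : ℝ) / (Fintype.card G : ℝ)) with hs
  have hspos : 0 < s := Real.sqrt_pos.mpr (by positivity)
  have hsC : ((s:ℂ)) * (s:ℂ) = (d:ℂ) / (Fintype.card G : ℂ) := by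
    rw [← Complex.ofReal_mul, Real.mul_self_sqrt (by positivity)]
    push_cast; ring
  have hsne : (s : ℂ) ≠ 0 := Complex.ofReal_ne_zero.mpr hspos.ne'
  have hdot : ∀ j k : Fin d, dotC ((s:ℂ) • coeff π j i) ((s:ℂ) • coeff π k i)
      = if j = k then 1 else 0 := by
    intro j k
    have h1 : dotC ((s:ℂ) • coeff π j i) ((s:ℂ) • coeff π k i)
        = (s:ℂ) * (s:ℂ) * dotC (coeff π j i) (coeff π k i) := by
      simp only [dotC, Pi.smul_apply, smul_eq_mul, map_mul, Complex.conj_ofReal, Finset.mul_sum]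
      exact Finset.sum_congr rfl fun x _ => by ring
    rw [h1, hsC, dotC_coeff π hπ i j k]
    by_cases hjk : j = k
    · simp only [hjk, if_pos rfl]
      field_simp
    · simp [hjk]
  refine ⟨hdot, ?_, ?_⟩
  · apply le_antisymm
    · rw [Submodule.span_le]
      rintro _ ⟨j, rfl⟩
      exact Submodule.smul_mem _ _ (Submodule.subset_span ⟨j, rfl⟩)
    · rw [Esp, Submodule.span_le]
      rintro _ ⟨j, rfl⟩
      have hcj : coeff π j i = (s:ℂ)⁻¹ • ((s:ℂ) • coeff π j i) := by
        rw [smul_smul, inv_mul_cancel₀ hsne, one_smul]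
      show coeff π j i ∈ _
      rw [hcj]
      exact Submodule.smul_mem _ _ (Submodule.subset_span ⟨j, rfl⟩)
  · have hli : LinearIndependent ℂ (fun j : Fin d => coeff π j i) := by
      rw [Fintype.linearIndependent_iff]
      intro cv hsum k
      have hlin : dotC (∑ j, cv j • coeff π j i) (coeff π k i)
          = ∑ j, cv j * dotC (coeff π j i) (coeff π k i) := by
        simp only [dotC]
        calc ∑ x, (∑ j, cv j • coeff π j i) x * (starRingEnd ℂ) (coeff π k i x)
            = ∑ x, ∑ j, cv j * (coeff π j i x * (starRingEnd ℂ) (coeff π k i x)) := by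
              refine Finset.sum_congr rfl fun x _ => ?_
              rw [Finset.sum_apply, Finset.sum_mul]
              exact Finset.sum_congr rfl fun j _ => by simp [mul_assoc]
          _ = ∑ j, cv j * ∑ x, coeff π j i x * (starRingEnd ℂ) (coeff π k i x) := by
              rw [Finset.sum_comm]
              exact Finset.sum_congr rfl fun j _ => (Finset.mul_sum _ _ _).symm
      rw [hsum] at hlin
      simp only [dotC_coeff π hπ i] at hlin
      have h0 : (0:ℂ) = cv k * ((Fintype.card G : ℂ)/(d:ℂ)) := by
        simpa [dotC, mul_ite, Finset.sum_ite_eq'] using hlin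
      rcases mul_eq_zero.mp h0.symm with h | h
      · exact h
      · exact absurd h (div_ne_zero hG0 hd0)
    have hesp : Esp π i = Submodule.span ℂ (Set.range fun j : Fin d => coeff π j i) := rfl
    rw [hesp]
    simpa using finrank_span_eq_card hli
end
end

section
/- Let n ≥ 1, let 𝕊_n be the symmetric group on n letters, S ⊆ 𝕊_n an inverse-closed subset, π an irreducible unitary representation of 𝕊_n of dimension d, and 1 ≤ i ≤ d. For each eigenvalue λ of π(S), let F^λ be a finite family of vectors in E_λ(π(S)) which is a frame for E_λ(π(S)). Then the collection Φ_{π,i} = {Θ̃_{π,i,λ}(ψ) : ψ ∈ F^λ, λ an eigenvalue of π(S)} is a frame for the subspace E_{π,i} of L²(𝕊_n). -/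
open scoped BigOperators

noncomputable section

namespace Stmt13Aux

open Matrix

variable {G : Type*} [Group G] {d : ℕ}

lemma coe_mul_pi (π : URep G d) (a b : G) :
    ((π (a * b) : Matrix (Fin d) (Fin d) ℂ)) =
      (π a : Matrix (Fin d) (Fin d) ℂ) * (π b : Matrix (Fin d) (Fin d) ℂ) := by
  rw [_root_.map_mul]; rfl

lemma coe_inv_pi (π : URep G d) (a : G) :
    ((π a⁻¹ : Matrix (Fin d) (Fin d) ℂ)) = star (π a : Matrix (Fin d) (Fin d) ℂ) := by
  rw [map_inv, ← Unitary.star_eq_inv, Unitary.coe_star]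

/-- Schur's lemma for the bespoke irreducibility predicate. -/
lemma schur (π : URep G d) (hπ : URepIrreducible π) (T : Matrix (Fin d) (Fin d) ℂ)
    (hT : ∀ g : G, (π g : Matrix (Fin d) (Fin d) ℂ) * T = T * (π g : Matrix (Fin d) (Fin d) ℂ)) :
    T = (Matrix.trace T / (d : ℂ)) • (1 : Matrix (Fin d) (Fin d) ℂ) := by
  obtain ⟨hd, hirr⟩ := hπ
  haveI : Nonempty (Fin d) := ⟨⟨0, hd⟩⟩
  haveI : Nontrivial (Fin d → ℂ) := Function.nontrivial
  obtain ⟨μ, hμ⟩ := Module.End.exists_eigenvalue (Matrix.mulVecLin T)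
  have hinv : ∀ g : G, ∀ ξ ∈ Module.End.eigenspace (Matrix.mulVecLin T) μ,
      (π g : Matrix (Fin d) (Fin d) ℂ).mulVec ξ ∈ Module.End.eigenspace (Matrix.mulVecLin T) μ := by
    intro g ξ hξ
    rw [Module.End.mem_eigenspace_iff] at hξ ⊢
    simp only [Matrix.mulVecLin_apply] at hξ ⊢
    rw [Matrix.mulVec_mulVec, ← hT, ← Matrix.mulVec_mulVec, hξ, Matrix.mulVec_smul]
  have hW : Module.End.eigenspace (Matrix.mulVecLin T) μ = ⊤ := by
    rcases hirr _ hinv with h | h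
    · exact absurd h (Module.End.hasEigenvalue_iff.mp hμ)
    · exact h
  have hTX : ∀ X : Fin d → ℂ, T.mulVec X = μ • X := by
    intro X
    have hX : X ∈ Module.End.eigenspace (Matrix.mulVecLin T) μ := hW ▸ Submodule.mem_top
    simpa only [Matrix.mulVecLin_apply] using Module.End.mem_eigenspace_iff.mp hX
  have hTeq : T = μ • (1 : Matrix (Fin d) (Fin d) ℂ) := by
    ext a b
    have h1 := congrFun (hTX (Pi.single b 1)) a
    simp only [Matrix.mulVec_single, MulOpposite.op_one, one_smul, Matrix.col_apply, mul_one, Pi.smul_apply, Pi.single_apply,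
      smul_eq_mul] at h1
    simp [h1, Matrix.smul_apply, Matrix.one_apply, mul_ite]
  have htr : Matrix.trace T = μ * d := by
    rw [hTeq, Matrix.trace_smul, Matrix.trace_one]
    simp [Fintype.card_fin, mul_comm]
  rw [htr, hTeq]
  congr 1
  have hdne : (d : ℂ) ≠ 0 := Nat.cast_ne_zero.mpr hd.ne'
  field_simp

/-- Schur orthogonality of the rows of an irreducible unitary representation. -/
lemma schur_orth [Fintype G] (π : URep G d) (hπ : URepIrreducible π) (k l i : Fin d) :
    ∑ g : G, (π g : Matrix (Fin d) (Fin d) ℂ) i k *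
        (starRingEnd ℂ) ((π g : Matrix (Fin d) (Fin d) ℂ) i l) =
      ((Fintype.card G : ℂ) / (d : ℂ)) * (if k = l then 1 else 0) := by
  classical
  set E : Matrix (Fin d) (Fin d) ℂ := Matrix.single k l 1 with hE
  set M : Matrix (Fin d) (Fin d) ℂ :=
    ∑ g : G, (π g : Matrix (Fin d) (Fin d) ℂ) * E * (π g⁻¹ : Matrix (Fin d) (Fin d) ℂ) with hM
  have hcomm : ∀ h : G,
      (π h : Matrix (Fin d) (Fin d) ℂ) * M = M * (π h : Matrix (Fin d) (Fin d) ℂ) := by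
    intro h
    rw [hM, Finset.mul_sum, Finset.sum_mul]
    refine Fintype.sum_equiv (Equiv.mulLeft h) _ _ fun g => ?_
    simp only [Equiv.coe_mulLeft]
    have e1 : (π h : Matrix (Fin d) (Fin d) ℂ) *
        ((π g : Matrix (Fin d) (Fin d) ℂ) * E * (π g⁻¹ : Matrix (Fin d) (Fin d) ℂ)) =
        (π (h * g) : Matrix (Fin d) (Fin d) ℂ) * E * (π g⁻¹ : Matrix (Fin d) (Fin d) ℂ) := by
      simp only [coe_mul_pi, mul_assoc]
    have e2 : ((π (h * g) : Matrix (Fin d) (Fin d) ℂ) * E *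
          (π ((h * g)⁻¹) : Matrix (Fin d) (Fin d) ℂ)) * (π h : Matrix (Fin d) (Fin d) ℂ) =
        (π (h * g) : Matrix (Fin d) (Fin d) ℂ) * E * (π g⁻¹ : Matrix (Fin d) (Fin d) ℂ) := by
      rw [mul_assoc, ← coe_mul_pi]
      congr 2
      group
    rw [e1, ← e2]
  have htr : Matrix.trace M = (Fintype.card G : ℂ) * (if k = l then 1 else 0) := by
    rw [hM, Matrix.trace_sum]
    have hone : ∀ g : G, Matrix.trace ((π g : Matrix (Fin d) (Fin d) ℂ) * E *
        (π g⁻¹ : Matrix (Fin d) (Fin d) ℂ)) = (if k = l then 1 else 0) := by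
      intro g
      rw [Matrix.trace_mul_cycle, ← coe_mul_pi, inv_mul_cancel]
      have h1 : ((π (1 : G) : Matrix (Fin d) (Fin d) ℂ)) = 1 := by rw [_root_.map_one]; rfl
      rw [h1, one_mul, hE]
      by_cases hkl : k = l
      · subst hkl; simp [Matrix.trace_single_eq_same]
      · simp [Matrix.trace_single_eq_of_ne _ _ _ hkl, hkl]
    simp only [hone, Finset.sum_const, Finset.card_univ, nsmul_eq_mul]
  have hentry : ∀ g : G, ((π g : Matrix (Fin d) (Fin d) ℂ) * E *
      (π g⁻¹ : Matrix (Fin d) (Fin d) ℂ)) i i =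
      (π g : Matrix (Fin d) (Fin d) ℂ) i k *
        (starRingEnd ℂ) ((π g : Matrix (Fin d) (Fin d) ℂ) i l) := by
    intro g
    have hstar : (π g⁻¹ : Matrix (Fin d) (Fin d) ℂ) l i =
        (starRingEnd ℂ) ((π g : Matrix (Fin d) (Fin d) ℂ) i l) := by
      rw [coe_inv_pi, Matrix.star_apply]; rfl
    rw [mul_assoc, Matrix.mul_apply, ← hstar]
    rw [Finset.sum_eq_single k]
    · rw [hE, Matrix.single_mul_apply_same, one_mul]
    · intro b _ hb
      rw [hE, Matrix.single_mul_apply_of_ne _ _ _ _ _ hb, mul_zero]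
    · intro hk; exact absurd (Finset.mem_univ k) hk
  have hMs := schur π hπ M hcomm
  have hMe : M i i = (Fintype.card G : ℂ) / (d : ℂ) * (if k = l then 1 else 0) := by
    rw [hMs, htr]
    simp [Matrix.smul_apply, Matrix.one_apply]
    split_ifs <;> ring
  calc ∑ g : G, (π g : Matrix (Fin d) (Fin d) ℂ) i k *
        (starRingEnd ℂ) ((π g : Matrix (Fin d) (Fin d) ℂ) i l)
      = ∑ g : G, ((π g : Matrix (Fin d) (Fin d) ℂ) * E *
          (π g⁻¹ : Matrix (Fin d) (Fin d) ℂ)) i i := by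
        exact Finset.sum_congr rfl fun g _ => (hentry g).symm
    _ = M i i := by rw [hM, Matrix.sum_apply]
    _ = _ := hMe

end Stmt13Aux
namespace Stmt13Aux

section dotC
variable {X : Type*} [Fintype X]

lemma dotC_smul_left (c : ℂ) (u v : X → ℂ) : dotC (c • u) v = c * dotC u v := by
  simp [dotC, Finset.mul_sum, mul_assoc]

lemma dotC_smul_right (c : ℂ) (u v : X → ℂ) :
    dotC u (c • v) = (starRingEnd ℂ) c * dotC u v := by
  simp [dotC, Finset.mul_sum]
  exact Finset.sum_congr rfl fun x _ => by ring

lemma dotC_sum_left {α : Type*} (s : Finset α) (f : α → (X → ℂ)) (v : X → ℂ) :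
    dotC (∑ a ∈ s, f a) v = ∑ a ∈ s, dotC (f a) v := by
  simp [dotC, Finset.sum_apply, Finset.sum_mul]
  rw [Finset.sum_comm]

lemma dotC_conj_comm (u v : X → ℂ) : dotC u v = (starRingEnd ℂ) (dotC v u) := by
  simp [dotC]
  exact Finset.sum_congr rfl fun x _ => by ring

lemma dotC_self (u : X → ℂ) : dotC u u = (norm2 u : ℝ) := by
  simp [dotC, norm2, Complex.mul_conj]

lemma norm2_nonneg (u : X → ℂ) : 0 ≤ norm2 u :=
  Finset.sum_nonneg fun x _ => Complex.normSq_nonneg _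

end dotC

open Matrix

variable {G : Type*} [Group G] {d : ℕ}

lemma theta_eq_sum_smul (π : URep G d) (i : Fin d) (Y : Fin d → ℂ) :
    Theta π i Y = ∑ k : Fin d, Y k • coeff π k i := by
  funext g
  simp [Theta, Finset.sum_apply]

lemma theta_mem_Esp (π : URep G d) (i : Fin d) (Y : Fin d → ℂ) :
    Theta π i Y ∈ Esp π i := by
  rw [theta_eq_sum_smul]
  exact Submodule.sum_mem _ fun k _ =>
    Submodule.smul_mem _ _ (Submodule.subset_span ⟨k, rfl⟩)

lemma mem_Esp_iff (π : URep G d) (i : Fin d) (v : G → ℂ) :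
    v ∈ Esp π i ↔ ∃ Y : Fin d → ℂ, v = Theta π i Y := by
  constructor
  · intro hv
    obtain ⟨c, hc⟩ := (Submodule.mem_span_range_iff_exists_fun ℂ).mp hv
    exact ⟨c, by rw [← hc, ← theta_eq_sum_smul]⟩
  · rintro ⟨Y, rfl⟩; exact theta_mem_Esp π i Y

lemma dotC_theta [Fintype G] (π : URep G d) (hπ : URepIrreducible π) (i : Fin d)
    (Xv Y : Fin d → ℂ) :
    dotC (Theta π i Xv) (Theta π i Y) = ((Fintype.card G : ℂ) / (d : ℂ)) * dotC Xv Y := by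
  classical
  unfold dotC Theta coeff
  calc ∑ g : G, (∑ k, Xv k * (π g : Matrix (Fin d) (Fin d) ℂ) i k) *
        (starRingEnd ℂ) (∑ l, Y l * (π g : Matrix (Fin d) (Fin d) ℂ) i l)
      = ∑ g : G, ∑ k, ∑ l, (Xv k * (starRingEnd ℂ) (Y l)) *
          ((π g : Matrix (Fin d) (Fin d) ℂ) i k *
            (starRingEnd ℂ) ((π g : Matrix (Fin d) (Fin d) ℂ) i l)) := by
        refine Finset.sum_congr rfl fun g _ => ?_
        rw [map_sum, Finset.sum_mul_sum]
        refine Finset.sum_congr rfl fun k _ => Finset.sum_congr rfl fun l _ => ?_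
        rw [_root_.map_mul]; ring
    _ = ∑ k, ∑ l, (Xv k * (starRingEnd ℂ) (Y l)) *
          ∑ g : G, (π g : Matrix (Fin d) (Fin d) ℂ) i k *
            (starRingEnd ℂ) ((π g : Matrix (Fin d) (Fin d) ℂ) i l) := by
        rw [Finset.sum_comm]
        refine Finset.sum_congr rfl fun k _ => ?_
        rw [Finset.sum_comm]
        exact Finset.sum_congr rfl fun l _ => (Finset.mul_sum _ _ _).symm
    _ = ∑ k, ∑ l, (Xv k * (starRingEnd ℂ) (Y l)) *
          (((Fintype.card G : ℂ) / (d : ℂ)) * (if k = l then 1 else 0)) := by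
        refine Finset.sum_congr rfl fun k _ => Finset.sum_congr rfl fun l _ => ?_
        rw [schur_orth π hπ k l i]
    _ = ((Fintype.card G : ℂ) / (d : ℂ)) * ∑ k, Xv k * (starRingEnd ℂ) (Y k) := by
        rw [Finset.mul_sum]
        refine Finset.sum_congr rfl fun k _ => ?_
        rw [Finset.sum_eq_single k]
        · simp; ring
        · intro b _ hb; simp [Ne.symm hb]
        · intro hk; exact absurd (Finset.mem_univ k) hk

lemma repSum_isHermitian (π : URep G d) (S : Finset G) (hS : ∀ s ∈ S, s⁻¹ ∈ S) :
    (repSum π S).IsHermitian := by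
  unfold Matrix.IsHermitian repSum
  rw [Matrix.conjTranspose_sum]
  refine Finset.sum_nbij' (fun a => a⁻¹) (fun a => a⁻¹) ?_ ?_ ?_ ?_ ?_
  · intro a ha; exact hS a ha
  · intro a ha; exact hS a ha
  · intro a _; exact inv_inv a
  · intro a _; exact inv_inv a
  · intro a _
    rw [coe_inv_pi]
    rfl

lemma dotC_mulVec_left {M : Matrix (Fin d) (Fin d) ℂ} (hM : M.IsHermitian)
    (u v : Fin d → ℂ) : dotC (M.mulVec u) v = dotC u (M.mulVec v) := by
  unfold dotC Matrix.mulVec dotProduct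
  simp only [Finset.sum_mul, map_sum, _root_.map_mul, Finset.mul_sum]
  rw [Finset.sum_comm]
  refine Finset.sum_congr rfl fun x _ => Finset.sum_congr rfl fun y _ => ?_
  have h3 : ∀ a b : Fin d, (starRingEnd ℂ) (M a b) = M b a := by
    intro a b
    have h4 := congrFun (congrFun hM b) a
    rw [Matrix.conjTranspose_apply] at h4
    exact h4
  simp only [h3]
  ring

lemma eig_orth {M : Matrix (Fin d) (Fin d) ℂ} (hM : M.IsHermitian) {lam mu : ℝ}
    (hne : mu ≠ lam) {u v : Fin d → ℂ} (hu : IsEigvec M mu u) (hv : IsEigvec M lam v) :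
    dotC u v = 0 := by
  have h1 : dotC (M.mulVec u) v = dotC u (M.mulVec v) := dotC_mulVec_left hM u v
  rw [hu, hv] at h1
  rw [dotC_smul_left, dotC_smul_right] at h1
  simp only [Complex.conj_ofReal] at h1
  have h2 : ((mu : ℂ) - (lam : ℂ)) * dotC u v = 0 := by rw [sub_mul, h1]; ring
  rcases mul_eq_zero.mp h2 with h | h
  · exfalso
    apply hne
    have := sub_eq_zero.mp h
    exact_mod_cast this
  · exact h

end Stmt13Aux
namespace Stmt13Aux

open Matrix

variable {d : ℕ} {M : Matrix (Fin d) (Fin d) ℂ}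

/-- The `j`-th column of the eigenvector unitary of a Hermitian matrix. -/
def bvec (hM : M.IsHermitian) (j : Fin d) : Fin d → ℂ :=
  fun a => (hM.eigenvectorUnitary : Matrix (Fin d) (Fin d) ℂ) a j

lemma bvec_eq (hM : M.IsHermitian) (j : Fin d) :
    bvec hM j = ⇑(hM.eigenvectorBasis j) := by
  funext a
  exact hM.eigenvectorUnitary_apply a j

lemma bvec_isEigvec (hM : M.IsHermitian) (j : Fin d) :
    IsEigvec M (hM.eigenvalues j) (bvec hM j) := by
  unfold IsEigvec
  rw [bvec_eq, hM.mulVec_eigenvectorBasis j]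
  funext a
  simp [Complex.real_smul]

lemma bvec_ne_zero (hM : M.IsHermitian) (j : Fin d) : bvec hM j ≠ 0 := by
  intro h0
  have h1 := hM.star_eigenvectorUnitary_mulVec j
  rw [← bvec_eq, h0, Matrix.mulVec_zero] at h1
  have h2 := congrFun h1 j
  simp [Pi.single_apply] at h2

/-- The component of `X` in the `lam`-eigenspace of `M`. -/
def compv (hM : M.IsHermitian) (X : Fin d → ℂ) (lam : ℝ) : Fin d → ℂ :=
  ∑ j ∈ Finset.univ.filter (fun j => hM.eigenvalues j = lam),
    ((star (hM.eigenvectorUnitary : Matrix (Fin d) (Fin d) ℂ)).mulVec X) j • bvec hM j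

lemma compv_isEigvec (hM : M.IsHermitian) (X : Fin d → ℂ) (lam : ℝ) :
    IsEigvec M lam (compv hM X lam) := by
  unfold IsEigvec compv
  have hms : ∀ (f : Fin d → (Fin d → ℂ)) (s : Finset (Fin d)),
      M.mulVec (∑ j ∈ s, f j) = ∑ j ∈ s, M.mulVec (f j) := by
    intro f s
    simp only [← Matrix.mulVecLin_apply, map_sum]
  rw [hms, Finset.smul_sum]
  refine Finset.sum_congr rfl fun j hj => ?_
  rw [Finset.mem_filter] at hj
  have h1 := bvec_isEigvec hM j
  unfold IsEigvec at h1
  rw [Matrix.mulVec_smul, h1, hj.2, smul_comm]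

lemma sum_compv (hM : M.IsHermitian) {Λ : Finset ℝ}
    (hΛ : ∀ lam : ℝ, lam ∈ Λ ↔ IsEigval M lam) (X : Fin d → ℂ) :
    ∑ lam ∈ Λ, compv hM X lam = X := by
  unfold compv
  rw [Finset.sum_fiberwise_of_maps_to (fun j _ => (hΛ _).mpr
    ⟨bvec hM j, bvec_ne_zero hM j, bvec_isEigvec hM j⟩)]
  have h1 : ∀ c : Fin d → ℂ, ∑ j, c j • bvec hM j =
      (hM.eigenvectorUnitary : Matrix (Fin d) (Fin d) ℂ).mulVec c := by
    intro c
    funext a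
    rw [Finset.sum_apply]
    simp [bvec, Matrix.mulVec, dotProduct, mul_comm]
  rw [h1, Matrix.mulVec_mulVec,
    Matrix.mem_unitaryGroup_iff.mp hM.eigenvectorUnitary.prop, Matrix.one_mulVec]

lemma dotC_compv (hM : M.IsHermitian) {Λ : Finset ℝ}
    (hΛ : ∀ lam : ℝ, lam ∈ Λ ↔ IsEigval M lam) (X : Fin d → ℂ) {lam : ℝ}
    (hlam : lam ∈ Λ) {ψ : Fin d → ℂ} (hψ : IsEigvec M lam ψ) :
    dotC X ψ = dotC (compv hM X lam) ψ := by
  conv_lhs => rw [← sum_compv hM hΛ X]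
  rw [dotC_sum_left]
  rw [Finset.sum_eq_single lam]
  · intro mu _ hmu
    exact eig_orth hM hmu (compv_isEigvec hM X mu) hψ
  · intro h; exact absurd hlam h

lemma norm2_decomp (hM : M.IsHermitian) {Λ : Finset ℝ}
    (hΛ : ∀ lam : ℝ, lam ∈ Λ ↔ IsEigval M lam) (X : Fin d → ℂ) :
    norm2 X = ∑ lam ∈ Λ, norm2 (compv hM X lam) := by
  have h1 : ((norm2 X : ℝ) : ℂ) = ∑ lam ∈ Λ, ((norm2 (compv hM X lam) : ℝ) : ℂ) := by
    calc ((norm2 X : ℝ) : ℂ) = dotC X X := (dotC_self X).symm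
      _ = dotC (∑ lam ∈ Λ, compv hM X lam) X := by rw [sum_compv hM hΛ X]
      _ = ∑ lam ∈ Λ, dotC (compv hM X lam) X := dotC_sum_left _ _ _
      _ = ∑ lam ∈ Λ, ((norm2 (compv hM X lam) : ℝ) : ℂ) := by
          refine Finset.sum_congr rfl fun lam hlam => ?_
          rw [dotC_conj_comm, dotC_compv hM hΛ X hlam (compv_isEigvec hM X lam),
            dotC_self, Complex.conj_ofReal]
  exact_mod_cast h1

end Stmt13Aux
/-- If, for each eigenvalue `λ` of `π(S)`, `F^λ` is a frame for `E_λ(π(S))`,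
then `Φ_{π,i} = {Θ̃_{π,i,λ}(ψ) : ψ ∈ F^λ, λ ∈ σ(π(S))}` is a frame for the subspace
`E_{π,i}` of `L²(𝕊_n)`. -/
theorem stmt13 {n : ℕ} (hn : 1 ≤ n) (S : Finset (Equiv.Perm (Fin n)))
    (hS : ∀ s ∈ S, s⁻¹ ∈ S) {d : ℕ} (π : URep (Equiv.Perm (Fin n)) d)
    (hπ : URepIrreducible π) (i : Fin d)
    (Λ : Finset ℝ) (hΛ : ∀ lam : ℝ, lam ∈ Λ ↔ IsEigval (repSum π S) lam)
    {ι : ℝ → Type*} [∀ lam, Fintype (ι lam)] (F : (lam : ℝ) → ι lam → (Fin d → ℂ))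
    (hF : ∀ lam ∈ Λ, IsFrameIn (F lam) {X | IsEigvec (repSum π S) lam X}) :
    IsFrameIn (fun p : Σ lam : Λ, ι (lam : ℝ) => ThetaT n π i (F (p.1 : ℝ) p.2))
      ((Esp π i : Set (Equiv.Perm (Fin n) → ℂ))) := by
  classical
  have hd : 0 < d := hπ.1
  have hM : (repSum π S).IsHermitian := Stmt13Aux.repSum_isHermitian π S hS
  choose AA BB hAB using hF
  have hΛne : Λ.Nonempty := by
    refine ⟨hM.eigenvalues ⟨0, hd⟩, (hΛ _).mpr ?_⟩
    exact ⟨Stmt13Aux.bvec hM ⟨0, hd⟩, Stmt13Aux.bvec_ne_zero hM _,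
      Stmt13Aux.bvec_isEigvec hM _⟩
  have hattne : Λ.attach.Nonempty := Finset.attach_nonempty_iff.mpr hΛne
  set A : ℝ := Λ.attach.inf' hattne (fun l => AA l.1 l.2) with hAdef
  set B : ℝ := Λ.attach.sup' hattne (fun l => BB l.1 l.2) with hBdef
  have hApos : 0 < A := by
    rw [hAdef, Finset.lt_inf'_iff]
    exact fun l _ => (hAB l.1 l.2).1
  have hAleB : A ≤ B := by
    obtain ⟨l, hl⟩ := hattne
    calc A ≤ AA l.1 l.2 := Finset.inf'_le (fun l => AA l.1 l.2) hl
      _ ≤ BB l.1 l.2 := (hAB l.1 l.2).2.1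
      _ ≤ B := Finset.le_sup' (fun l => BB l.1 l.2) hl
  -- constants
  have hnf : (0:ℝ) < (n.factorial : ℝ) := by exact_mod_cast n.factorial_pos
  have hdR : (0:ℝ) < (d : ℝ) := by exact_mod_cast hd
  set s : ℝ := Real.sqrt ((d : ℝ) / (n.factorial : ℝ)) with hsdef
  set κ : ℝ := (n.factorial : ℝ) / (d : ℝ) with hκdef
  have hκpos : 0 < κ := by positivity
  have hcardF : ((Fintype.card (Equiv.Perm (Fin n)) : ℂ) / (d : ℂ)) = ((κ : ℝ) : ℂ) := by
    rw [Fintype.card_perm, Fintype.card_fin, hκdef]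
    push_cast
    ring
  have hs2 : s * s = (d : ℝ) / (n.factorial : ℝ) := Real.mul_self_sqrt (by positivity)
  have hfac : s * s * (κ * κ) = κ := by
    rw [hs2, hκdef]
    field_simp
  have hThetaT : ∀ ψ : Fin d → ℂ, ThetaT n π i ψ = ((s : ℂ)) • Theta π i ψ := by
    intro ψ
    funext g
    simp [ThetaT, Pi.smul_apply, smul_eq_mul, hsdef]
  refine ⟨A, B, hApos, hAleB, ?_, ?_⟩
  · -- all frame vectors lie in Esp
    rintro ⟨lam, t⟩
    show ThetaT n π i (F (lam : ℝ) t) ∈ (Esp π i : Set (Equiv.Perm (Fin n) → ℂ))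
    have h1 : ThetaT n π i (F (lam : ℝ) t) = Theta π i ((s : ℂ) • F (lam : ℝ) t) := by
      rw [hThetaT]
      funext g
      simp [Theta, Pi.smul_apply, smul_eq_mul, Finset.mul_sum, mul_assoc]
    rw [h1]
    exact Stmt13Aux.theta_mem_Esp π i _
  · intro v hv
    obtain ⟨Xv, rfl⟩ := (Stmt13Aux.mem_Esp_iff π i v).mp hv
    -- inner products with the frame vectors
    have hdot : ∀ ψ : Fin d → ℂ,
        dotC (Theta π i Xv) (ThetaT n π i ψ) = (s : ℂ) * ((κ : ℝ) : ℂ) * dotC Xv ψ := by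
      intro ψ
      rw [hThetaT, Stmt13Aux.dotC_smul_right, Stmt13Aux.dotC_theta π hπ i, hcardF,
        Complex.conj_ofReal]
      ring
    have hnormSq : ∀ ψ : Fin d → ℂ,
        Complex.normSq (dotC (Theta π i Xv) (ThetaT n π i ψ)) =
          κ * Complex.normSq (dotC Xv ψ) := by
      intro ψ
      rw [hdot, Complex.normSq_mul, Complex.normSq_mul, Complex.normSq_ofReal,
        Complex.normSq_ofReal]
      linear_combination Complex.normSq (dotC Xv ψ) * hfac
    have hnorm2v : norm2 (Theta π i Xv) = κ * norm2 Xv := by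
      have h2 := Stmt13Aux.dotC_theta π hπ i Xv Xv
      rw [Stmt13Aux.dotC_self, Stmt13Aux.dotC_self, hcardF] at h2
      exact_mod_cast h2
    -- the inner sums
    set f : ℝ → ℝ := fun lam => ∑ t : ι lam, Complex.normSq (dotC Xv (F lam t)) with hfdef
    have hsum : ∑ p : Σ lam : Λ, ι (lam : ℝ),
        Complex.normSq (dotC (Theta π i Xv) (ThetaT n π i (F (p.1 : ℝ) p.2)))
        = κ * ∑ lam ∈ Λ, f lam := by
      rw [← Finset.univ_sigma_univ, Finset.sum_sigma]
      have h3 : ∀ lam : {x // x ∈ Λ}, ∑ t : ι (lam : ℝ),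
          Complex.normSq (dotC (Theta π i Xv) (ThetaT n π i (F (lam : ℝ) t)))
          = κ * f (lam : ℝ) := by
        intro lam
        rw [hfdef, Finset.mul_sum]
        exact Finset.sum_congr rfl fun t _ => hnormSq _
      rw [Finset.sum_congr rfl fun lam _ => h3 lam,
        Finset.sum_coe_sort Λ (fun lam => κ * f lam), ← Finset.mul_sum]
    -- decomposition of Xv
    have hXdecomp := Stmt13Aux.norm2_decomp hM hΛ Xv
    have hbound : ∀ lam (h : lam ∈ Λ),
        AA lam h * norm2 (Stmt13Aux.compv hM Xv lam) ≤ f lam ∧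
          f lam ≤ BB lam h * norm2 (Stmt13Aux.compv hM Xv lam) := by
      intro lam h
      obtain ⟨hA0, hAB0, hmem0, hfr0⟩ := hAB lam h
      have hfeq : f lam = ∑ t : ι lam, Complex.normSq (dotC (Stmt13Aux.compv hM Xv lam) (F lam t)) := by
        rw [hfdef]
        exact Finset.sum_congr rfl fun t _ =>
          congrArg Complex.normSq (Stmt13Aux.dotC_compv hM hΛ Xv h (hmem0 t))
      have hcomp_mem : Stmt13Aux.compv hM Xv lam ∈ {X | IsEigvec (repSum π S) lam X} :=
        Stmt13Aux.compv_isEigvec hM Xv lam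
      have := hfr0 _ hcomp_mem
      rw [← hfeq] at this
      exact this
    -- lower bound
    have hlow : A * norm2 Xv ≤ ∑ lam ∈ Λ, f lam := by
      rw [hXdecomp, Finset.mul_sum]
      refine Finset.sum_le_sum fun lam h => ?_
      calc A * norm2 (Stmt13Aux.compv hM Xv lam)
          ≤ AA lam h * norm2 (Stmt13Aux.compv hM Xv lam) :=
            mul_le_mul_of_nonneg_right (Finset.inf'_le (fun l => AA l.1 l.2) (Finset.mem_attach Λ ⟨lam, h⟩))
              (Stmt13Aux.norm2_nonneg _)
        _ ≤ f lam := (hbound lam h).1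
    have hhigh : ∑ lam ∈ Λ, f lam ≤ B * norm2 Xv := by
      rw [hXdecomp, Finset.mul_sum]
      refine Finset.sum_le_sum fun lam h => ?_
      calc f lam ≤ BB lam h * norm2 (Stmt13Aux.compv hM Xv lam) := (hbound lam h).2
        _ ≤ B * norm2 (Stmt13Aux.compv hM Xv lam) :=
            mul_le_mul_of_nonneg_right (Finset.le_sup' (fun l => BB l.1 l.2) (Finset.mem_attach Λ ⟨lam, h⟩))
              (Stmt13Aux.norm2_nonneg _)
    constructor
    · calc A * norm2 (Theta π i Xv) = κ * (A * norm2 Xv) := by rw [hnorm2v]; ring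
        _ ≤ κ * ∑ lam ∈ Λ, f lam := by
            exact mul_le_mul_of_nonneg_left hlow hκpos.le
        _ = _ := hsum.symm
    · calc ∑ p : Σ lam : Λ, ι (lam : ℝ),
          Complex.normSq (dotC (Theta π i Xv) (ThetaT n π i (F (p.1 : ℝ) p.2)))
          = κ * ∑ lam ∈ Λ, f lam := hsum
        _ ≤ κ * (B * norm2 Xv) := mul_le_mul_of_nonneg_left hhigh hκpos.le
        _ = B * norm2 (Theta π i Xv) := by rw [hnorm2v]; ring
end
end

section
/- Let n ≥ 1, let 𝕊_n be the symmetric group on n letters and S ⊆ 𝕊_n an inverse-closed subset. Let (π^α)_{α∈A} be a finite family of pairwise non-unitarily-equivalent irreducible unitary representations of 𝕊_n, of dimensions d_α, such that every irreducible unitary representation of 𝕊_n is unitarily equivalent to some π^α. Suppose Φ = (φ_t)_{t∈T'} is a frame for L²(𝕊_n) with the property that every atom φ_t is nonzero and belongs to Z_{π^α,i,λ} for some α ∈ A, 1 ≤ i ≤ d_α, and eigenvalue λ of π^α(S). Then for each α ∈ A, 1 ≤ i ≤ d_α, and eigenvalue λ of π^α(S), the family of vectors {X ∈ E_λ(π^α(S))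 : Θ̃_{π^α,i,λ}(X) = φ_t for some t ∈ T' with φ_t ∈ Z_{π^α,i,λ}} is a frame for E_λ(π^α(S)). -/
open scoped BigOperators

noncomputable section

section AuxSchur
set_option linter.unusedSectionVars false
variable {G : Type*} [Group G] [Fintype G]

set_option linter.unusedSectionVars false in
lemma coe_inv' {d : ℕ} (π : URep G d) (g : G) :
    ((π g⁻¹ : Matrix.unitaryGroup (Fin d) ℂ) : Matrix (Fin d) (Fin d) ℂ)
      = star ((π g : Matrix (Fin d) (Fin d) ℂ)) := by
  rw [map_inv]; rfl

def avg {d d' : ℕ} (π : URep G d) (σ : URep G d') (B : Matrix (Fin d) (Fin d') ℂ) :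
    Matrix (Fin d) (Fin d') ℂ :=
  ∑ g : G, (π g : Matrix (Fin d) (Fin d) ℂ) * B * star ((σ g : Matrix (Fin d') (Fin d') ℂ))

lemma avg_intertwine {d d' : ℕ} (π : URep G d) (σ : URep G d')
    (B : Matrix (Fin d) (Fin d') ℂ) (h : G) :
    (π h : Matrix (Fin d) (Fin d) ℂ) * avg π σ B
      = avg π σ B * (σ h : Matrix (Fin d') (Fin d') ℂ) := by
  have lhs : (π h : Matrix (Fin d) (Fin d) ℂ) * avg π σ B
      = ∑ g : G, (π h : Matrix (Fin d) (Fin d) ℂ) * ((π g : Matrix (Fin d) (Fin d) ℂ) * B * star ((σ g : Matrix (Fin d') (Fin d') ℂ))) := by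
    unfold avg; exact Matrix.mul_sum _ _ _
  have rhs : avg π σ B * (σ h : Matrix (Fin d') (Fin d') ℂ)
      = ∑ g : G, ((π g : Matrix (Fin d) (Fin d) ℂ) * B * star ((σ g : Matrix (Fin d') (Fin d') ℂ))) * (σ h : Matrix (Fin d') (Fin d') ℂ) := by
    unfold avg; exact Matrix.sum_mul _ _ _
  rw [lhs, rhs]
  refine Fintype.sum_equiv (Equiv.mulLeft h) _ _ fun g => ?_
  simp only [Equiv.coe_mulLeft]
  have e1 : ((π (h * g) : Matrix.unitaryGroup (Fin d) ℂ) : Matrix (Fin d) (Fin d) ℂ)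
      = (π h : Matrix (Fin d) (Fin d) ℂ) * (π g : Matrix (Fin d) (Fin d) ℂ) := by
    rw [map_mul]; rfl
  have e2 : star ((σ (h * g) : Matrix.unitaryGroup (Fin d') ℂ) : Matrix (Fin d') (Fin d') ℂ)
      = star ((σ g : Matrix (Fin d') (Fin d') ℂ)) * star ((σ h : Matrix (Fin d') (Fin d') ℂ)) := by
    have e3 : ((σ (h * g) : Matrix.unitaryGroup (Fin d') ℂ) : Matrix (Fin d') (Fin d') ℂ)
        = (σ h : Matrix (Fin d') (Fin d') ℂ) * (σ g : Matrix (Fin d') (Fin d') ℂ) := by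
      rw [map_mul]; rfl
    rw [e3, star_mul]
  rw [e1, e2]
  simp only [Matrix.mul_assoc]
  rw [Matrix.mem_unitaryGroup_iff'.mp (σ h).2, Matrix.mul_one]

lemma mulVec_eq_of_forall {d : ℕ} {C D : Matrix (Fin d) (Fin d) ℂ}
    (h : ∀ ξ : Fin d → ℂ, C.mulVec ξ = D.mulVec ξ) : C = D := by
  ext i j
  have := congrFun (h (Pi.single j 1)) i
  rwa [Matrix.mulVec_single_one, Matrix.mulVec_single_one] at this

lemma commutant_scalar {d : ℕ} {π : URep G d} (hπ : URepIrreducible π)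
    (C : Matrix (Fin d) (Fin d) ℂ)
    (hC : ∀ g : G, (π g : Matrix (Fin d) (Fin d) ℂ) * C = C * (π g : Matrix (Fin d) (Fin d) ℂ)) :
    ∃ μ : ℂ, C = μ • 1 := by
  haveI : Nonempty (Fin d) := Fin.pos_iff_nonempty.mp hπ.1
  obtain ⟨μ, hμ⟩ := Module.End.exists_eigenvalue (Matrix.mulVecLin C)
  refine ⟨μ, ?_⟩
  have hW : ∀ g : G, ∀ ξ ∈ Module.End.eigenspace (Matrix.mulVecLin C) μ,
      ((π g : Matrix (Fin d) (Fin d) ℂ)).mulVec ξ ∈ Module.End.eigenspace (Matrix.mulVecLin C) μ := by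
    intro g ξ hξ
    rw [Module.End.mem_eigenspace_iff] at hξ ⊢
    simp only [Matrix.mulVecLin_apply] at hξ ⊢
    rw [Matrix.mulVec_mulVec, ← hC g, ← Matrix.mulVec_mulVec, hξ, Matrix.mulVec_smul]
  rcases hπ.2 _ hW with hbot | htop
  · exact absurd hbot hμ
  · refine mulVec_eq_of_forall fun ξ => ?_
    have hξ : ξ ∈ Module.End.eigenspace (Matrix.mulVecLin C) μ := htop ▸ Submodule.mem_top
    rw [Module.End.mem_eigenspace_iff] at hξ
    simp only [Matrix.mulVecLin_apply] at hξ
    rw [hξ, Matrix.smul_mulVec, Matrix.one_mulVec]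

set_option linter.unusedSectionVars false in
lemma intertwiner_zero_or_equiv {d d' : ℕ} {π : URep G d} {σ : URep G d'}
    (hπ : URepIrreducible π) (hσ : URepIrreducible σ)
    (T : Matrix (Fin d) (Fin d') ℂ)
    (hT : ∀ g : G, (π g : Matrix (Fin d) (Fin d) ℂ) * T
        = T * (σ g : Matrix (Fin d') (Fin d') ℂ)) :
    T = 0 ∨ UEquiv π σ := by
  by_cases hT0 : T = 0
  · exact Or.inl hT0
  right
  have hkerinv : ∀ g : G, ∀ ξ ∈ LinearMap.ker T.mulVecLin,
      ((σ g : Matrix (Fin d') (Fin d') ℂ)).mulVec ξ ∈ LinearMap.ker T.mulVecLin := by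
    intro g ξ hξ
    rw [LinearMap.mem_ker, Matrix.mulVecLin_apply] at hξ ⊢
    rw [Matrix.mulVec_mulVec, ← hT g, ← Matrix.mulVec_mulVec, hξ, Matrix.mulVec_zero]
  have hker : LinearMap.ker T.mulVecLin = ⊥ := by
    rcases hσ.2 (LinearMap.ker T.mulVecLin) hkerinv with h | h
    · exact h
    · exfalso
      apply hT0
      apply Matrix.ext
      intro i j
      have h1 : (Pi.single j 1 : Fin d' → ℂ) ∈ LinearMap.ker T.mulVecLin := h ▸ Submodule.mem_top
      rw [LinearMap.mem_ker, Matrix.mulVecLin_apply, Matrix.mulVec_single_one] at h1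
      have := congrFun h1 i
      simpa using this
  have hrginv : ∀ g : G, ∀ ξ ∈ LinearMap.range T.mulVecLin,
      ((π g : Matrix (Fin d) (Fin d) ℂ)).mulVec ξ ∈ LinearMap.range T.mulVecLin := by
    rintro g ξ ⟨w, rfl⟩
    refine ⟨(σ g : Matrix (Fin d') (Fin d') ℂ).mulVec w, ?_⟩
    simp only [Matrix.mulVecLin_apply]
    rw [Matrix.mulVec_mulVec, ← hT g, ← Matrix.mulVec_mulVec]
  have hrange : LinearMap.range T.mulVecLin = ⊤ := by
    rcases hπ.2 (LinearMap.range T.mulVecLin) hrginv with h | h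
    · exfalso
      apply hT0
      apply Matrix.ext
      intro i j
      have hm : T.mulVec (Pi.single j 1) ∈ LinearMap.range T.mulVecLin :=
        ⟨Pi.single j 1, rfl⟩
      rw [h, Submodule.mem_bot, Matrix.mulVec_single_one] at hm
      have := congrFun hm i
      simpa using this
    · exact h
  have hbij : Function.Bijective T.mulVecLin :=
    ⟨LinearMap.ker_eq_bot.mp hker, LinearMap.range_eq_top.mp hrange⟩
  have hdd : d = d' := by
    have := (LinearEquiv.ofBijective T.mulVecLin hbij).finrank_eq
    simpa [Module.finrank_fin_fun] using this.symm
  subst hdd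
  refine ⟨rfl, ?_⟩
  have hstar : ∀ g : G, star T * (π g : Matrix (Fin d) (Fin d) ℂ)
      = (σ g : Matrix (Fin d) (Fin d) ℂ) * star T := by
    intro g
    have h1 := congrArg star (hT g⁻¹)
    rw [star_mul, star_mul, coe_inv' π, coe_inv' σ, star_star, star_star] at h1
    exact h1
  have hcomm : ∀ g : G, (σ g : Matrix (Fin d) (Fin d) ℂ) * (star T * T)
      = (star T * T) * (σ g : Matrix (Fin d) (Fin d) ℂ) := by
    intro g
    calc (σ g : Matrix (Fin d) (Fin d) ℂ) * (star T * T)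
        = ((σ g : Matrix (Fin d) (Fin d) ℂ) * star T) * T := by rw [Matrix.mul_assoc]
      _ = (star T * (π g : Matrix (Fin d) (Fin d) ℂ)) * T := by rw [hstar g]
      _ = star T * ((π g : Matrix (Fin d) (Fin d) ℂ) * T) := by rw [Matrix.mul_assoc]
      _ = star T * (T * (σ g : Matrix (Fin d) (Fin d) ℂ)) := by rw [hT g]
      _ = (star T * T) * (σ g : Matrix (Fin d) (Fin d) ℂ) := by rw [Matrix.mul_assoc]
  obtain ⟨μ, hμ⟩ := commutant_scalar hσ (star T * T) fun g => hcomm g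
  haveI : Nonempty (Fin d) := Fin.pos_iff_nonempty.mp hπ.1
  obtain ⟨j⟩ := ‹Nonempty (Fin d)›
  have hdiag : (star T * T) j j = μ := by
    rw [hμ]; simp [Matrix.one_apply]
  have hdiag2 : (star T * T) j j = ∑ k, (Complex.normSq (T k j) : ℂ) := by
    rw [Matrix.mul_apply]
    refine Finset.sum_congr rfl fun k _ => ?_
    rw [Matrix.star_apply, mul_comm]
    exact Complex.mul_conj (T k j)
  set c : ℝ := ∑ k, Complex.normSq (T k j) with hc
  have hμc : μ = (c : ℂ) := by rw [← hdiag, hdiag2, hc]; push_cast; ring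
  have hcpos : 0 < c := by
    have hnn : ∀ k ∈ Finset.univ, (0:ℝ) ≤ Complex.normSq (T k j) :=
      fun k _ => Complex.normSq_nonneg _
    have hex : ∃ k ∈ Finset.univ, (0:ℝ) < Complex.normSq (T k j) := by
      by_contra hcol
      push_neg at hcol
      have hcol0 : ∀ k, T k j = 0 := by
        intro k
        have h0 : Complex.normSq (T k j) = 0 :=
          le_antisymm (hcol k (Finset.mem_univ k)) (Complex.normSq_nonneg _)
        exact Complex.normSq_eq_zero.mp h0
      have hmv : T.mulVec (Pi.single j 1) = 0 := by
        rw [Matrix.mulVec_single_one]; funext k; exact hcol0 k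
      have hj : (Pi.single j 1 : Fin d → ℂ) = 0 := by
        apply hbij.1
        simp only [Matrix.mulVecLin_apply, hmv, map_zero]
      have := congrFun hj j
      simp at this
    exact Finset.sum_pos' hnn hex
  set s : ℂ := ((Real.sqrt c)⁻¹ : ℂ) with hsdef
  have hconj : star s = s := by
    rw [hsdef, ← Complex.ofReal_inv]; exact Complex.conj_ofReal _
  have hstarU : star (s • T) = s • star T := by rw [star_smul, hconj]
  have hs1 : s * s * (c : ℂ) = 1 := by
    have h1 : Real.sqrt c * Real.sqrt c = c := Real.mul_self_sqrt hcpos.le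
    have h2 : Real.sqrt c ≠ 0 := ne_of_gt (Real.sqrt_pos.mpr hcpos)
    have hr : (Real.sqrt c)⁻¹ * (Real.sqrt c)⁻¹ * c = 1 := by
      field_simp
      rw [sq, h1]
    rw [hsdef]
    push_cast
    exact_mod_cast congrArg (fun x : ℝ => (x : ℂ)) hr
  have hUU : star (s • T) * (s • T) = 1 := by
    rw [hstarU, Matrix.smul_mul, Matrix.mul_smul, hμ, hμc, smul_smul, smul_smul]
    have hfin : s * s * (c:ℂ) = 1 := hs1
    rw [hfin, one_smul]
  refine ⟨s • T, Matrix.mem_unitaryGroup_iff'.mpr hUU, fun g => ?_⟩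
  simp only [finCongr_refl, Matrix.reindex_refl_refl]
  rw [Matrix.inv_eq_left_inv hUU]
  have h5 : star (s • T) * (π g : Matrix (Fin d) (Fin d) ℂ)
      = (σ g : Matrix (Fin d) (Fin d) ℂ) * star (s • T) := by
    rw [hstarU, Matrix.smul_mul, hstar g, Matrix.mul_smul]
  rw [h5, Matrix.mul_assoc, hUU, Matrix.mul_one]

set_option linter.unusedSectionVars false in
lemma avg_entry {d d' : ℕ} (π : URep G d) (σ : URep G d') (k p : Fin d) (l q : Fin d') :
    avg π σ (Matrix.single k l 1) p q
      = ∑ g : G, (π g : Matrix (Fin d) (Fin d) ℂ) p k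
          * (starRingEnd ℂ) ((σ g : Matrix (Fin d') (Fin d') ℂ) q l) := by
  unfold avg
  rw [Matrix.sum_apply]
  refine Finset.sum_congr rfl fun g _ => ?_
  rw [Matrix.mul_apply]
  simp [Matrix.mul_apply, Matrix.single, Matrix.star_apply, Complex.star_def,
    ite_and, mul_ite, ite_mul]

lemma schur_inequiv {d d' : ℕ} {π : URep G d} {σ : URep G d'}
    (hπ : URepIrreducible π) (hσ : URepIrreducible σ) (hne : ¬ UEquiv π σ)
    (p k : Fin d) (q l : Fin d') :
    ∑ g : G, (π g : Matrix (Fin d) (Fin d) ℂ) p k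
        * (starRingEnd ℂ) ((σ g : Matrix (Fin d') (Fin d') ℂ) q l) = 0 := by
  rcases intertwiner_zero_or_equiv hπ hσ (avg π σ (Matrix.single k l 1))
      (avg_intertwine π σ _) with h0 | he
  · rw [← avg_entry, h0]; rfl
  · exact absurd he hne

lemma schur_self {d : ℕ} {π : URep G d} (hπ : URepIrreducible π) (p k q l : Fin d) :
    ∑ g : G, (π g : Matrix (Fin d) (Fin d) ℂ) p k
        * (starRingEnd ℂ) ((π g : Matrix (Fin d) (Fin d) ℂ) q l)
      = (if p = q then 1 else 0) * (if k = l then 1 else 0) * ((Fintype.card G : ℂ) / d) := by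
  obtain ⟨μ, hμ⟩ := commutant_scalar hπ (avg π π (Matrix.single k l 1))
    (fun g => (avg_intertwine π π _ g))
  have htr : Matrix.trace (avg π π (Matrix.single k l 1))
      = (Fintype.card G : ℂ) * (if k = l then 1 else 0) := by
    unfold avg
    rw [Matrix.trace_sum]
    have : ∀ g : G, Matrix.trace ((π g : Matrix (Fin d) (Fin d) ℂ)
        * Matrix.single k l 1 * star ((π g : Matrix (Fin d) (Fin d) ℂ)))
        = (if k = l then 1 else 0) := by
      intro g
      rw [Matrix.trace_mul_cycle]
      rw [show star ((π g : Matrix (Fin d) (Fin d) ℂ)) * (π g : Matrix (Fin d) (Fin d) ℂ)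
          = 1 from Matrix.mem_unitaryGroup_iff'.mp (π g).2]
      rw [Matrix.one_mul]
      simp [Matrix.trace, Matrix.diag, Matrix.single, ite_and, eq_comm]
    rw [Finset.sum_congr rfl fun g _ => this g]
    simp [mul_comm]
  have htr2 : Matrix.trace (avg π π (Matrix.single k l 1)) = μ * d := by
    rw [hμ]
    simp [Matrix.trace_smul, Matrix.trace_one, mul_comm]
  have hd : (d : ℂ) ≠ 0 := Nat.cast_ne_zero.mpr (Nat.pos_iff_ne_zero.mp hπ.1)
  have hμval : μ = (if k = l then 1 else 0) * ((Fintype.card G : ℂ) / d) := by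
    have h9 := htr.symm.trans htr2
    by_cases hkl : k = l
    · simp only [hkl, if_true] at h9 ⊢
      field_simp
      linear_combination -h9
    · simp only [hkl, if_false] at h9 ⊢
      rw [zero_mul]
      rcases mul_eq_zero.mp (by rw [← h9]; ring : μ * (d:ℂ) = 0) with h | h
      · exact h
      · exact absurd h hd
  have hentry := avg_entry π π k p l q
  rw [hμ] at hentry
  rw [← hentry]
  simp [Matrix.smul_apply, Matrix.one_apply, hμval]
  by_cases hpq : p = q <;> by_cases hkl : k = l <;> simp [hpq, hkl]

lemma dotC_smul_left {X : Type*} [Fintype X] (a : ℂ) (u w : X → ℂ) :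
    dotC (a • u) w = a * dotC u w := by
  simp [dotC, Finset.mul_sum, mul_assoc]

lemma dotC_smul_right {X : Type*} [Fintype X] (a : ℂ) (u w : X → ℂ) :
    dotC u (a • w) = (starRingEnd ℂ) a * dotC u w := by
  simp only [dotC, Pi.smul_apply, smul_eq_mul, map_mul, Finset.mul_sum]
  exact Finset.sum_congr rfl fun x _ => by ring

lemma dotC_zero_right {X : Type*} [Fintype X] (u : X → ℂ) : dotC u 0 = 0 := by
  simp [dotC]

lemma dotC_self {X : Type*} [Fintype X] (u : X → ℂ) : dotC u u = (norm2 u : ℂ) := by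
  unfold dotC norm2
  push_cast
  exact Finset.sum_congr rfl fun x _ => (Complex.mul_conj (u x))

set_option linter.unusedSectionVars false in
lemma dotC_theta {d d' : ℕ} (π : URep G d) (σ : URep G d') (i : Fin d) (j : Fin d')
    (v : Fin d → ℂ) (Y : Fin d' → ℂ) :
    dotC (Theta π i v) (Theta σ j Y)
      = ∑ k, ∑ l, (v k * (starRingEnd ℂ) (Y l))
          * (∑ g : G, (π g : Matrix (Fin d) (Fin d) ℂ) i k
              * (starRingEnd ℂ) ((σ g : Matrix (Fin d') (Fin d') ℂ) j l)) := by
  have key : ∀ g : G, (Theta π i v g) * (starRingEnd ℂ) (Theta σ j Y g)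
      = ∑ k, ∑ l, (v k * (starRingEnd ℂ) (Y l))
          * ((π g : Matrix (Fin d) (Fin d) ℂ) i k
              * (starRingEnd ℂ) ((σ g : Matrix (Fin d') (Fin d') ℂ) j l)) := by
    intro g
    unfold Theta coeff
    rw [map_sum, Finset.sum_mul_sum]
    exact Finset.sum_congr rfl fun k _ => Finset.sum_congr rfl fun l _ => by
      rw [map_mul]; ring
  calc dotC (Theta π i v) (Theta σ j Y)
      = ∑ g : G, ∑ k, ∑ l, (v k * (starRingEnd ℂ) (Y l))
          * ((π g : Matrix (Fin d) (Fin d) ℂ) i k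
              * (starRingEnd ℂ) ((σ g : Matrix (Fin d') (Fin d') ℂ) j l)) :=
        Finset.sum_congr rfl fun g _ => key g
    _ = ∑ k, ∑ g : G, ∑ l, (v k * (starRingEnd ℂ) (Y l))
          * ((π g : Matrix (Fin d) (Fin d) ℂ) i k
              * (starRingEnd ℂ) ((σ g : Matrix (Fin d') (Fin d') ℂ) j l)) :=
        Finset.sum_comm
    _ = ∑ k, ∑ l, ∑ g : G, (v k * (starRingEnd ℂ) (Y l))
          * ((π g : Matrix (Fin d) (Fin d) ℂ) i k
              * (starRingEnd ℂ) ((σ g : Matrix (Fin d') (Fin d') ℂ) j l)) :=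
        Finset.sum_congr rfl fun k _ => Finset.sum_comm
    _ = _ := Finset.sum_congr rfl fun k _ => Finset.sum_congr rfl fun l _ =>
        (Finset.mul_sum _ _ _).symm

set_option linter.unusedSectionVars false in
lemma dotC_theta_cross {d d' : ℕ} {π : URep G d} {σ : URep G d'}
    (hπ : URepIrreducible π) (hσ : URepIrreducible σ) (hne : ¬ UEquiv π σ)
    (i : Fin d) (j : Fin d') (v : Fin d → ℂ) (Y : Fin d' → ℂ) :
    dotC (Theta π i v) (Theta σ j Y) = 0 := by
  rw [dotC_theta]
  refine Finset.sum_eq_zero fun k _ => Finset.sum_eq_zero fun l _ => ?_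
  rw [schur_inequiv hπ hσ hne i k j l, mul_zero]

set_option linter.unusedSectionVars false in
lemma dotC_theta_same {d : ℕ} {π : URep G d} (hπ : URepIrreducible π)
    (i j : Fin d) (v Y : Fin d → ℂ) :
    dotC (Theta π i v) (Theta π j Y)
      = (if i = j then 1 else 0) * ((Fintype.card G : ℂ) / d) * dotC v Y := by
  rw [dotC_theta]
  have : ∀ k : Fin d, ∀ l : Fin d, (v k * (starRingEnd ℂ) (Y l))
      * (∑ g : G, (π g : Matrix (Fin d) (Fin d) ℂ) i k
          * (starRingEnd ℂ) ((π g : Matrix (Fin d) (Fin d) ℂ) j l))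
      = (v k * (starRingEnd ℂ) (Y l)) * ((if i = j then 1 else 0)
          * (if k = l then 1 else 0) * ((Fintype.card G : ℂ) / d)) := by
    intro k l
    rw [schur_self hπ i k j l]
  simp only [this]
  unfold dotC
  rw [Finset.mul_sum]
  refine Finset.sum_congr rfl fun k _ => ?_
  rw [Finset.sum_eq_single k (fun l _ hlk => by simp [Ne.symm hlk])
    (fun hk => absurd (Finset.mem_univ k) hk)]
  by_cases hij : i = j <;> simp [hij] <;> try ring

set_option linter.unusedSectionVars false in
lemma dotC_mulVec_left {d : ℕ} (M : Matrix (Fin d) (Fin d) ℂ) (v w : Fin d → ℂ) :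
    dotC (M.mulVec v) w = dotC v ((star M).mulVec w) := by
  unfold dotC Matrix.mulVec dotProduct
  simp only [map_sum, map_mul, Finset.sum_mul, Finset.mul_sum]
  rw [Finset.sum_comm]
  refine Finset.sum_congr rfl fun y _ => Finset.sum_congr rfl fun x _ => ?_
  rw [Matrix.star_apply]
  rw [show ((starRingEnd ℂ) (star (M x y)) : ℂ) = M x y from by
    simp [Complex.star_def]]
  ring

lemma repSum_star {d : ℕ} (π : URep G d) (S : Finset G) (hS : ∀ s ∈ S, s⁻¹ ∈ S) :
    star (repSum π S) = repSum π S := by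
  unfold repSum
  rw [star_sum]
  refine Finset.sum_nbij' (fun s => s⁻¹) (fun s => s⁻¹) ?_ ?_ ?_ ?_ ?_
  · exact fun s hs => hS s hs
  · exact fun s hs => hS s hs
  · intro s _; exact inv_inv s
  · intro s _; exact inv_inv s
  · intro s hs
    rw [← coe_inv' π]

lemma eig_orth {d : ℕ} {M : Matrix (Fin d) (Fin d) ℂ} (hM : star M = M)
    {lam mu : ℝ} (hne : lam ≠ mu) {v w : Fin d → ℂ}
    (hv : IsEigvec M lam v) (hw : IsEigvec M mu w) : dotC v w = 0 := by
  have h1 : dotC (M.mulVec v) w = (lam : ℂ) * dotC v w := by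
    rw [hv, dotC_smul_left]
  have h2 : dotC (M.mulVec v) w = (mu : ℂ) * dotC v w := by
    rw [dotC_mulVec_left, hM, hw, dotC_smul_right]
    congr 1
    exact Complex.conj_ofReal mu
  have h3 : ((lam : ℂ) - mu) * dotC v w = 0 := by
    rw [sub_mul, ← h1, ← h2, sub_self]
  rcases mul_eq_zero.mp h3 with h | h
  · exfalso
    apply hne
    have := sub_eq_zero.mp h
    exact_mod_cast this
  · exact h

lemma theta_smul {G : Type*} [Group G] {d : ℕ} (π : URep G d) (i : Fin d) (a : ℂ)
    (Y : Fin d → ℂ) (g : G) : Theta π i (a • Y) g = a * Theta π i Y g := by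
  unfold Theta
  rw [Finset.mul_sum]
  exact Finset.sum_congr rfl fun k _ => by simp [mul_assoc]


end AuxSchur

/-- If `Φ = (φ_t)` is a frame for `L²(𝕊_n)` whose atoms are nonzero and each
belongs to some `Z_{π^α,i,λ}` (with `λ` an eigenvalue of `π^α(S)`), then for each `α`, `i`
and eigenvalue `λ` of `π^α(S)`, the family of vectors `X ∈ E_λ(π^α(S))` with
`Θ̃_{π^α,i,λ}(X) = φ_t` for some `t` with `φ_t ∈ Z_{π^α,i,λ}` is a frame for `E_λ(π^α(S))`. -/
theorem stmt15 {n : ℕ} (hn : 1 ≤ n) (S : Finset (Equiv.Perm (Fin n)))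
    (hS : ∀ s ∈ S, s⁻¹ ∈ S) {A : Type*} [Fintype A] {d : A → ℕ}
    (π : ∀ α : A, URep (Equiv.Perm (Fin n)) (d α))
    (hirr : ∀ α, URepIrreducible (π α))
    (hpair : ∀ α β, α ≠ β → ¬ UEquiv (π α) (π β))
    (hcomplete : ∀ (d' : ℕ) (σ : URep (Equiv.Perm (Fin n)) d'),
        URepIrreducible σ → ∃ α, UEquiv σ (π α))
    {T' : Type*} [Fintype T'] (φ : T' → (Equiv.Perm (Fin n) → ℂ))
    (hframe : IsFrameIn φ Set.univ)
    (hatom : ∀ t : T', φ t ≠ 0 ∧ ∃ (α : A) (i : Fin (d α)) (lam : ℝ),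
        IsEigval (repSum (π α) S) lam ∧ φ t ∈ Zset (π α) i lam S) :
    ∀ (α : A) (i : Fin (d α)) (lam : ℝ), IsEigval (repSum (π α) S) lam →
      ∃ X : T' → (Fin (d α) → ℂ),
        (∀ t, IsEigvec (repSum (π α) S) lam (X t)) ∧
        (∀ t, φ t ∈ Zset (π α) i lam S → ThetaT n (π α) i (X t) = φ t) ∧
        (∀ t, φ t ∉ Zset (π α) i lam S → X t = 0) ∧
        IsFrameIn X {v | IsEigvec (repSum (π α) S) lam v} := by
  intro α i lam _hlam
  classical
  have hcard : (Fintype.card (Equiv.Perm (Fin n)) : ℝ) = (n.factorial : ℝ) := by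
    rw [Fintype.card_perm, Fintype.card_fin]
  have hdpos : (0:ℝ) < d α := by exact_mod_cast (hirr α).1
  have hNpos : (0:ℝ) < n.factorial := by exact_mod_cast n.factorial_pos
  set c : ℝ := Real.sqrt ((d α : ℝ) / (n.factorial : ℝ)) with hcdef
  have hcpos : 0 < c := Real.sqrt_pos.mpr (by positivity)
  have hcne : ((c : ℂ)) ≠ 0 := by exact_mod_cast ne_of_gt hcpos
  set r : ℝ := (n.factorial : ℝ) / (d α : ℝ) with hrdef
  have hrpos : 0 < r := by positivity
  have hcc : c⁻¹ * c⁻¹ = r := by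
    rw [hcdef, ← mul_inv, Real.mul_self_sqrt (by positivity), inv_div, hrdef]
  have hmem : ∀ t : T', φ t ∈ Zset (π α) i lam S → ∃ Y : Fin (d α) → ℂ,
      IsEigvec (repSum (π α) S) lam Y ∧ φ t = Theta (π α) i Y := fun t h => h
  set X : T' → (Fin (d α) → ℂ) := fun t =>
    if h : φ t ∈ Zset (π α) i lam S then ((c:ℂ)⁻¹) • (hmem t h).choose else 0 with hX
  have hXval : ∀ t, X t = if h : φ t ∈ Zset (π α) i lam S
      then ((c:ℂ)⁻¹) • (hmem t h).choose else 0 := fun t => by rw [hX]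
  have prop1 : ∀ t, IsEigvec (repSum (π α) S) lam (X t) := by
    intro t
    rw [hXval t]
    by_cases h : φ t ∈ Zset (π α) i lam S
    · rw [dif_pos h]
      have hc : (repSum (π α) S).mulVec (hmem t h).choose = (lam : ℂ) • (hmem t h).choose :=
        (hmem t h).choose_spec.1
      show (repSum (π α) S).mulVec _ = (lam : ℂ) • _
      rw [Matrix.mulVec_smul, hc, smul_comm]
    · rw [dif_neg h]
      unfold IsEigvec
      rw [Matrix.mulVec_zero, smul_zero]
  have prop2 : ∀ t, φ t ∈ Zset (π α) i lam S → ThetaT n (π α) i (X t) = φ t := by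
    intro t h
    have hXt : X t = ((c:ℂ)⁻¹) • (hmem t h).choose := by rw [hXval t, dif_pos h]
    funext g
    show ((Real.sqrt ((d α) / n.factorial) : ℝ) : ℂ) * Theta (π α) i (X t) g = φ t g
    rw [hXt, theta_smul]
    rw [show ((Real.sqrt ((d α) / n.factorial) : ℝ) : ℂ) = (c : ℂ) from by rw [hcdef]]
    rw [← mul_assoc, mul_inv_cancel₀ hcne, one_mul]
    exact (congrFun (hmem t h).choose_spec.2 g).symm
  have prop3 : ∀ t, φ t ∉ Zset (π α) i lam S → X t = 0 := by
    intro t h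
    rw [hXval t]; exact dif_neg h
  obtain ⟨A0, B0, hA0pos, hA0B0, _, hbounds⟩ := hframe
  have hkey : ∀ v : Fin (d α) → ℂ, IsEigvec (repSum (π α) S) lam v → ∀ t,
      Complex.normSq (dotC (Theta (π α) i v) (φ t))
        = r * Complex.normSq (dotC v (X t)) := by
    intro v hv t
    by_cases h : φ t ∈ Zset (π α) i lam S
    · obtain ⟨hY, hφt⟩ := (hmem t h).choose_spec
      have hXt : X t = ((c:ℂ)⁻¹) • (hmem t h).choose := by rw [hXval t, dif_pos h]
      rw [hφt, hXt, dotC_theta_same (hirr α) i i v _, dotC_smul_right]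
      rw [if_pos rfl, one_mul]
      rw [show (starRingEnd ℂ) ((c:ℂ)⁻¹) = ((c⁻¹ : ℝ) : ℂ) from by
        rw [← Complex.ofReal_inv]; exact Complex.conj_ofReal _]
      rw [Complex.normSq_mul, Complex.normSq_mul]
      rw [show ((Fintype.card (Equiv.Perm (Fin n)) : ℂ) / (d α : ℂ)) = ((r : ℝ) : ℂ) from by
        rw [hrdef, ← hcard]; push_cast; ring]
      rw [Complex.normSq_ofReal, Complex.normSq_ofReal]
      rw [← hcc]
      ring
    · have hXt : X t = 0 := by rw [hXval t]; exact dif_neg h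
      rw [hXt, dotC_zero_right]
      obtain ⟨-, β, j, mu, _hmu, hz⟩ := hatom t
      obtain ⟨Y, hY, hφt⟩ := hz
      rw [hφt]
      by_cases hβ : β = α
      · subst hβ
        by_cases hij : i = j
        · subst hij
          by_cases hmu' : mu = lam
          · subst hmu'
            exact absurd ⟨Y, hY, hφt⟩ h
          · rw [dotC_theta_same (hirr β) i i v Y]
            rw [eig_orth (repSum_star (π β) S hS) (fun hh => hmu' hh.symm) hv hY]
            simp
        · rw [dotC_theta_same (hirr β) i j v Y]
          simp [hij]
      · rw [dotC_theta_cross (hirr α) (hirr β) (hpair α β (fun hh => hβ hh.symm)) i j v Y]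
        simp
  have hnorm : ∀ v : Fin (d α) → ℂ, norm2 (Theta (π α) i v) = r * norm2 v := by
    intro v
    have h1 : ((norm2 (Theta (π α) i v) : ℝ) : ℂ) = ((r * norm2 v : ℝ) : ℂ) := by
      rw [← dotC_self, dotC_theta_same (hirr α) i i v v]
      rw [if_pos rfl, one_mul]
      rw [dotC_self]
      rw [show ((Fintype.card (Equiv.Perm (Fin n)) : ℂ) / (d α : ℂ)) = ((r : ℝ) : ℂ) from by
        rw [hrdef, ← hcard]; push_cast; ring]
      push_cast
      ring
    exact_mod_cast h1
  refine ⟨X, prop1, prop2, prop3, A0, B0, hA0pos, hA0B0, fun t => prop1 t, ?_⟩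
  intro v hv
  have hv' : IsEigvec (repSum (π α) S) lam v := hv
  obtain ⟨hlo, hhi⟩ := hbounds (Theta (π α) i v) (Set.mem_univ _)
  have hsum : ∑ t, Complex.normSq (dotC (Theta (π α) i v) (φ t))
      = r * ∑ t, Complex.normSq (dotC v (X t)) := by
    rw [Finset.mul_sum]
    exact Finset.sum_congr rfl fun t _ => hkey v hv' t
  rw [hnorm v, hsum] at hlo hhi
  constructor
  · have h2 : r * (A0 * norm2 v) ≤ r * ∑ t, Complex.normSq (dotC v (X t)) := by
      calc r * (A0 * norm2 v) = A0 * (r * norm2 v) := by ring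
        _ ≤ _ := hlo
    exact le_of_mul_le_mul_left h2 hrpos
  · have h2 : r * ∑ t, Complex.normSq (dotC v (X t)) ≤ r * (B0 * norm2 v) := by
      calc r * ∑ t, Complex.normSq (dotC v (X t)) ≤ B0 * (r * norm2 v) := hhi
        _ = r * (B0 * norm2 v) := by ring
    exact le_of_mul_le_mul_left h2 hrpos
end
end
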